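/- For each fixed integer ℓ ≥ 0, with η_ℓ = √(1 - ℓ/N) and s(x) = 2∫_x^1 √(1-y²) dy, one has for x in any compact subset of (-1,1): (N-ℓ)·s(η_ℓ^{-1} x) = N·s(x) - ℓ·arccos(x) + O(N^{-1}) as N → ∞, uniformly in x. -/

import Mathlib

open Real intervalIntegral Set

noncomputable def sFun (x : ℝ) : ℝ := 2 * ∫ y in x..1, Real.sqrt (1 - y ^ 2)

lemma phi_hasDerivAt {y : ℝ} (h1 : -1 < y) (h2 : y < 1) :
    HasDerivAt (fun y => Real.arccos y - y * Real.sqrt (1 - y ^ 2))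
      (-(2 * Real.sqrt (1 - y ^ 2))) y := by
  have hpos : (0:ℝ) < 1 - y ^ 2 := by nlinarith
  have hS : (0:ℝ) < Real.sqrt (1 - y ^ 2) := Real.sqrt_pos.2 hpos
  have hin : HasDerivAt (fun y : ℝ => 1 - y ^ 2) (-(2 * y)) y := by
    simpa using ((hasDerivAt_pow 2 y).const_sub 1)
  have hsq : HasDerivAt (fun y : ℝ => Real.sqrt (1 - y ^ 2))
      (-(2 * y) / (2 * Real.sqrt (1 - y ^ 2))) y := hin.sqrt hpos.ne'
  have hmul : HasDerivAt (fun y : ℝ => y * Real.sqrt (1 - y ^ 2))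
      (1 * Real.sqrt (1 - y ^ 2) + y * (-(2 * y) / (2 * Real.sqrt (1 - y ^ 2)))) y :=
    (hasDerivAt_id y).mul hsq
  have harc : HasDerivAt Real.arccos (-(1 / Real.sqrt (1 - y ^ 2))) y :=
    Real.hasDerivAt_arccos (by linarith) (by linarith)
  have := harc.sub hmul
  refine this.congr_deriv ?_
  have hS2 : Real.sqrt (1 - y ^ 2) ^ 2 = 1 - y ^ 2 := Real.sq_sqrt hpos.le
  have hSne := hS.ne'
  field_simp
  nlinarith [hS2]

lemma sFun_eq {x : ℝ} (h1 : -1 < x) (h2 : x < 1) :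
    sFun x = Real.arccos x - x * Real.sqrt (1 - x ^ 2) := by
  have key : ∫ y in x..1, -(2 * Real.sqrt (1 - y ^ 2)) =
      (Real.arccos 1 - 1 * Real.sqrt (1 - 1 ^ 2)) -
      (Real.arccos x - x * Real.sqrt (1 - x ^ 2)) := by
    refine intervalIntegral.integral_eq_sub_of_hasDeriv_right_of_le
      (f := fun y => Real.arccos y - y * Real.sqrt (1 - y ^ 2)) h2.le ?_ ?_ ?_
    · exact (Real.continuous_arccos.sub (continuous_id.mul
        (((continuous_const.sub (continuous_pow 2)).sqrt)))).continuousOn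
    · intro y hy
      exact (phi_hasDerivAt (by linarith [hy.1]) hy.2).hasDerivWithinAt
    · apply Continuous.intervalIntegrable
      exact (continuous_const.mul ((continuous_const.sub (continuous_pow 2)).sqrt)).neg
  have h1' : Real.arccos 1 = 0 := Real.arccos_one
  rw [intervalIntegral.integral_neg, intervalIntegral.integral_const_mul] at key
  simp only [h1'] at key
  have hz : Real.sqrt (1 - 1 ^ 2) = 0 := by norm_num
  rw [hz] at key
  unfold sFun
  linarith [key]

noncomputable def Fx (x t : ℝ) : ℝ :=
  (1 - t) * (Real.arccos (x / Real.sqrt (1 - t)) - Real.arccos x) -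
    x * (Real.sqrt (1 - t - x ^ 2) - Real.sqrt (1 - x ^ 2))

lemma Fx_hasDerivAt {x t : ℝ} (ht : t < 1 - x ^ 2) :
    HasDerivAt (Fx x) (Real.arccos x - Real.arccos (x / Real.sqrt (1 - t))) t := by
  have ht1 : t < 1 := by nlinarith [sq_nonneg x]
  have hA2 : (0:ℝ) < 1 - t := by linarith
  have hB2 : (0:ℝ) < 1 - t - x ^ 2 := by linarith
  set A := Real.sqrt (1 - t) with hA
  have hApos : 0 < A := Real.sqrt_pos.2 hA2
  have hAsq : A ^ 2 = 1 - t := Real.sq_sqrt hA2.le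
  set B := Real.sqrt (1 - t - x ^ 2) with hB
  have hBpos : 0 < B := Real.sqrt_pos.2 hB2
  have hBsq : B ^ 2 = 1 - t - x ^ 2 := Real.sq_sqrt hB2.le
  have hc2 : (x / A) ^ 2 < 1 := by
    rw [div_pow, hAsq, div_lt_one hA2]; linarith
  have hcne1 : x / A ≠ 1 := by intro h; rw [h] at hc2; norm_num at hc2
  have hcnem1 : x / A ≠ -1 := by intro h; rw [h] at hc2; norm_num at hc2
  have hlin : HasDerivAt (fun t : ℝ => 1 - t) (-1) t := by
    simpa using (hasDerivAt_id t).const_sub 1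
  have hsqA : HasDerivAt (fun t : ℝ => Real.sqrt (1 - t)) (-1 / (2 * A)) t :=
    hlin.sqrt hA2.ne'
  have hcd : HasDerivAt (fun t : ℝ => x / Real.sqrt (1 - t))
      ((0 * A - x * (-1 / (2 * A))) / A ^ 2) t :=
    (hasDerivAt_const t x).div hsqA hApos.ne'
  have harc : HasDerivAt (fun t : ℝ => Real.arccos (x / Real.sqrt (1 - t)))
      (-(1 / Real.sqrt (1 - (x / A) ^ 2)) * ((0 * A - x * (-1 / (2 * A))) / A ^ 2)) t :=
    by have := (Real.hasDerivAt_arccos hcnem1 hcne1).comp t hcd; exact this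
  have h3 : HasDerivAt (fun t : ℝ => 1 - t - x ^ 2) (-1) t := hlin.sub_const (x ^ 2)
  have hsqB : HasDerivAt (fun t : ℝ => Real.sqrt (1 - t - x ^ 2)) (-1 / (2 * B)) t :=
    h3.sqrt hB2.ne'
  have total := (hlin.mul (harc.sub_const (Real.arccos x))).sub
    (((hsqB.sub_const (Real.sqrt (1 - x ^ 2))).const_mul x))
  have hfun : Fx x = fun t : ℝ => (1 - t) * (Real.arccos (x / Real.sqrt (1 - t)) - Real.arccos x) -
      x * (Real.sqrt (1 - t - x ^ 2) - Real.sqrt (1 - x ^ 2)) := rfl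
  rw [hfun]
  refine total.congr_deriv ?_
  have hsqc : Real.sqrt (1 - (x / A) ^ 2) = B / A := by
    have h1 : (1:ℝ) - (x / A) ^ 2 = (1 - t - x ^ 2) / A ^ 2 := by
      field_simp
      nlinarith [hAsq]
    rw [h1, Real.sqrt_div hB2.le, Real.sqrt_sq hApos.le]
  rw [hsqc]
  have h1t : (1:ℝ) - t = A ^ 2 := hAsq.symm
  rw [h1t]
  rw [Real.sqrt_sq hApos.le]
  field_simp
  ring

lemma arccos_lip {ρ a b : ℝ} (hρ : ρ < 1) (ha : a ∈ Icc (-ρ) ρ) (hb : b ∈ Icc (-ρ) ρ) :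
    |Real.arccos b - Real.arccos a| ≤ (Real.sqrt (1 - ρ ^ 2))⁻¹ * |b - a| := by
  have hρ0 : 0 ≤ ρ := by linarith [ha.1, ha.2]
  have hpos : (0:ℝ) < 1 - ρ ^ 2 := by nlinarith
  have hspos : 0 < Real.sqrt (1 - ρ ^ 2) := Real.sqrt_pos.2 hpos
  have key := (convex_Icc (-ρ) ρ).norm_image_sub_le_of_norm_hasDerivWithin_le
    (f := Real.arccos) (f' := fun y => -(1 / Real.sqrt (1 - y ^ 2)))
    (C := (Real.sqrt (1 - ρ ^ 2))⁻¹) ?_ ?_ ha hb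
  · simpa [Real.norm_eq_abs] using key
  · intro y hy
    exact (Real.hasDerivAt_arccos (by rintro rfl; linarith [hy.1])
      (by rintro rfl; linarith [hy.2])).hasDerivWithinAt
  · intro y hy
    have hy2 : y ^ 2 ≤ ρ ^ 2 := by nlinarith [hy.1, hy.2]
    have h1 : Real.sqrt (1 - ρ ^ 2) ≤ Real.sqrt (1 - y ^ 2) :=
      Real.sqrt_le_sqrt (by linarith)
    rw [Real.norm_eq_abs, abs_neg, one_div, abs_inv,
      abs_of_nonneg (Real.sqrt_nonneg _)]
    exact inv_anti₀ hspos h1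

set_option maxHeartbeats 1000000 in
lemma Fx_bound {r x t : ℝ} (hr1 : r < 1) (hxr : |x| ≤ r) (ht0 : 0 ≤ t)
    (ht : t ≤ (1 - r ^ 2) / 2) :
    |Fx x t| ≤ (Real.sqrt ((1 - r ^ 2) / 2))⁻¹ * (2 * t ^ 2) := by
  have hr0 : 0 ≤ r := (abs_nonneg x).trans hxr
  set t₀ : ℝ := (1 - r ^ 2) / 2 with ht₀
  have ht₀pos : 0 < t₀ := by rw [ht₀]; nlinarith
  have hden : 0 < 1 - t₀ := by rw [ht₀]; nlinarith
  have hdenh : (1:ℝ) / 2 ≤ 1 - t₀ := by rw [ht₀]; nlinarith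
  set ρ : ℝ := r / Real.sqrt (1 - t₀) with hρdef
  have hsd : 0 < Real.sqrt (1 - t₀) := Real.sqrt_pos.2 hden
  have hsdsq : Real.sqrt (1 - t₀) ^ 2 = 1 - t₀ := Real.sq_sqrt hden.le
  have hρsq : ρ ^ 2 * (1 - t₀) = r ^ 2 := by
    rw [hρdef, div_pow, hsdsq]; field_simp
  have hρ0 : 0 ≤ ρ := div_nonneg hr0 hsd.le
  have hρ1 : ρ < 1 := by
    rw [hρdef, div_lt_one hsd]
    have : r ^ 2 < 1 - t₀ := by rw [ht₀]; nlinarith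
    nlinarith [hsdsq, hsd]
  have hx2 : x ^ 2 ≤ r ^ 2 := by nlinarith [abs_nonneg x, sq_abs x]
  have hρbig : (Real.sqrt (1 - ρ ^ 2))⁻¹ ≤ (Real.sqrt t₀)⁻¹ := by
    have h1 : t₀ ≤ 1 - ρ ^ 2 := by nlinarith [hρsq, sq_nonneg (1 - r ^ 2)]
    exact inv_anti₀ (Real.sqrt_pos.2 ht₀pos) (Real.sqrt_le_sqrt h1)
  -- bound on derivative
  have hder : ∀ s ∈ Icc (0:ℝ) t,
      |Real.arccos x - Real.arccos (x / Real.sqrt (1 - s))| ≤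
        (Real.sqrt t₀)⁻¹ * (2 * t) := by
    intro s hs
    have hst : s ≤ t₀ := le_trans hs.2 ht
    have hs1 : 0 < 1 - s := by linarith
    set As : ℝ := Real.sqrt (1 - s) with hAs
    have hAspos : 0 < As := Real.sqrt_pos.2 hs1
    have hAssq : As ^ 2 = 1 - s := Real.sq_sqrt hs1.le
    have hAsle1 : As ≤ 1 := by
      rw [hAs]; exact Real.sqrt_le_one.2 (by linarith [hs.1])
    have ht₀h : t₀ ≤ 1 / 2 := by rw [ht₀]; nlinarith
    have hAsge : (1:ℝ) / 2 ≤ As := by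
      rw [hAs]
      refine (Real.le_sqrt (by norm_num) hs1.le).2 (by norm_num; linarith)
    have hAslb : 1 - s ≤ As := by
      have h := mul_le_mul_of_nonneg_left hAsle1 hAspos.le
      nlinarith [hAssq]
    -- |x / As| ≤ ρ
    have hcρ : |x / As| ≤ ρ := by
      rw [abs_div, abs_of_nonneg hAspos.le, hρdef]
      exact div_le_div₀ hr0 hxr hsd (by rw [hAs]; exact Real.sqrt_le_sqrt (by linarith))
    have hxρ : |x| ≤ ρ := by
      refine le_trans hxr ?_
      rw [hρdef, le_div_iff₀ hsd]
      have h : Real.sqrt (1 - t₀) ≤ 1 := Real.sqrt_le_one.2 (by linarith)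
      nlinarith [mul_le_mul_of_nonneg_left h hr0]
    have hlip := arccos_lip hρ1 (abs_le.1 hxρ) (abs_le.1 hcρ)
    have hdiff : |x / As - x| ≤ 2 * s := by
      have he : x / As - x = x * ((1 - As) / As) := by field_simp
      rw [he, abs_mul, abs_of_nonneg (div_nonneg (by linarith) hAspos.le)]
      have h1 : (1 - As) / As ≤ 2 * s := by
        rw [div_le_iff₀ hAspos]
        nlinarith [hs.1]
      have h2 : |x| ≤ 1 := le_trans hxr hr1.le
      nlinarith [abs_nonneg x, hs.1]
    calc |Real.arccos x - Real.arccos (x / As)|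
        = |Real.arccos (x / As) - Real.arccos x| := by rw [abs_sub_comm]
      _ ≤ (Real.sqrt (1 - ρ ^ 2))⁻¹ * |x / As - x| := hlip
      _ ≤ (Real.sqrt t₀)⁻¹ * (2 * s) := by
          apply mul_le_mul hρbig hdiff (abs_nonneg _)
          positivity
      _ ≤ (Real.sqrt t₀)⁻¹ * (2 * t) := by
          have : (0:ℝ) ≤ (Real.sqrt t₀)⁻¹ := by positivity
          nlinarith [hs.2]
  -- mean value
  have hF0 : Fx x 0 = 0 := by
    simp [Fx]
  have key := (convex_Icc (0:ℝ) t).norm_image_sub_le_of_norm_hasDerivWithin_le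
    (f := Fx x) (f' := fun s => Real.arccos x - Real.arccos (x / Real.sqrt (1 - s)))
    (C := (Real.sqrt t₀)⁻¹ * (2 * t))
    (fun s hs => (Fx_hasDerivAt (by
      have := hs.2; have := ht; nlinarith [hx2])).hasDerivWithinAt)
    (fun s hs => by simpa [Real.norm_eq_abs] using hder s hs)
    (left_mem_Icc.2 ht0) (right_mem_Icc.2 ht0)
  rw [hF0, sub_zero, sub_zero, Real.norm_eq_abs, Real.norm_eq_abs,
    abs_of_nonneg ht0] at key
  calc |Fx x t| ≤ (Real.sqrt t₀)⁻¹ * (2 * t) * t := key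
    _ = (Real.sqrt t₀)⁻¹ * (2 * t ^ 2) := by ring

set_option maxHeartbeats 2000000 in
theorem stmt19 (ℓ : ℕ) (K : Set ℝ) (hK : IsCompact K) (hK' : K ⊆ Set.Ioo (-1 : ℝ) 1) :
    ∃ C : ℝ, ∃ N₀ : ℕ, ℓ < N₀ ∧ ∀ N : ℕ, N₀ ≤ N → ∀ x ∈ K,
      |((N : ℝ) - ℓ) * sFun ((Real.sqrt (1 - (ℓ : ℝ) / N))⁻¹ * x) -
          ((N : ℝ) * sFun x - ℓ * Real.arccos x)| ≤ C / N := by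
  rcases K.eq_empty_or_nonempty with hKe | hne
  · exact ⟨0, ℓ + 1, by omega, fun N hN x hx => by simp [hKe] at hx⟩
  obtain ⟨z, hzK, hz⟩ := hK.exists_isMaxOn hne continuous_abs.continuousOn
  set r : ℝ := |z| with hr
  have hzI := hK' hzK
  have hr1 : r < 1 := abs_lt.2 ⟨hzI.1, hzI.2⟩
  have hr0 : 0 ≤ r := abs_nonneg z
  set t₀ : ℝ := (1 - r ^ 2) / 2 with ht₀
  have ht₀pos : 0 < t₀ := by rw [ht₀]; nlinarith
  have ht₀1 : t₀ < 1 := by rw [ht₀]; nlinarith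
  refine ⟨(Real.sqrt t₀)⁻¹ * (2 * (ℓ:ℝ) ^ 2), ⌈(ℓ:ℝ) / t₀⌉₊ + ℓ + 1, by omega, ?_⟩
  intro N hN x hx
  have hN0 : 0 < N := by omega
  have hNr : (0:ℝ) < N := by exact_mod_cast hN0
  set t : ℝ := (ℓ:ℝ) / N with htdef
  have ht0 : 0 ≤ t := by positivity
  have htt₀ : t ≤ t₀ := by
    have h1 : ((ℓ:ℝ) / t₀) ≤ ⌈(ℓ:ℝ) / t₀⌉₊ := Nat.le_ceil _
    have h2 : ((⌈(ℓ:ℝ) / t₀⌉₊ : ℕ) : ℝ) ≤ N := by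
      exact_mod_cast le_trans (by omega : ⌈(ℓ:ℝ) / t₀⌉₊ ≤ ⌈(ℓ:ℝ) / t₀⌉₊ + ℓ + 1) hN
    have h3 : (ℓ:ℝ) ≤ N * t₀ := (div_le_iff₀ ht₀pos).1 (h1.trans h2)
    rw [htdef, div_le_iff₀ hNr]
    linarith
  -- basic facts about x
  have hxI := hK' hx
  have hxr : |x| ≤ r := hz hx
  have hx2 : x ^ 2 ≤ r ^ 2 := by nlinarith [abs_nonneg x, sq_abs x]
  have ht1 : t < 1 := lt_of_le_of_lt htt₀ ht₀1
  have hx2t : x ^ 2 < 1 - t := by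
    have : t₀ < 1 - r ^ 2 := by rw [ht₀]; nlinarith
    nlinarith
  set η : ℝ := Real.sqrt (1 - t) with hη
  have hηpos : 0 < η := Real.sqrt_pos.2 (by linarith)
  have hηsq : η ^ 2 = 1 - t := Real.sq_sqrt (by linarith)
  set B : ℝ := Real.sqrt (1 - t - x ^ 2) with hB
  have hBnn : 0 ≤ B := Real.sqrt_nonneg _
  set S : ℝ := Real.sqrt (1 - x ^ 2) with hS
  have hc2 : (x / η) ^ 2 < 1 := by
    rw [div_pow, hηsq, div_lt_one (by linarith)]; linarith
  have hcm1 : -1 < x / η := by nlinarith [sq_nonneg (x / η + 1)]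
  have hc1 : x / η < 1 := by nlinarith [sq_nonneg (x / η - 1)]
  have hsqc : Real.sqrt (1 - (x / η) ^ 2) = B / η := by
    have h1 : (1:ℝ) - (x / η) ^ 2 = (1 - t - x ^ 2) / η ^ 2 := by
      field_simp
      nlinarith [hηsq]
    rw [h1, hB, Real.sqrt_div (by linarith) , Real.sqrt_sq hηpos.le]
  have harg : (Real.sqrt (1 - (ℓ:ℝ) / N))⁻¹ * x = x / η := by
    rw [← htdef, ← hη, inv_mul_eq_div]
  rw [harg, sFun_eq hcm1 hc1, sFun_eq hxI.1 hxI.2, hsqc]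
  have hNl : (N:ℝ) - ℓ = N * (1 - t) := by
    rw [htdef]; field_simp
  have hl : (ℓ:ℝ) = N * t := by
    rw [htdef]; field_simp
  have key : ((N:ℝ) - ℓ) * (Real.arccos (x / η) - x / η * (B / η)) -
      ((N:ℝ) * (Real.arccos x - x * S) - (ℓ:ℝ) * Real.arccos x) = N * Fx x t := by
    have hFx : Fx x t = (1 - t) * (Real.arccos (x / η) - Real.arccos x) - x * (B - S) := rfl
    have hln : (ℓ:ℝ) * (↑N:ℝ)⁻¹ = 1 - η ^ 2 := by rw [hηsq, htdef]; ring
    rw [hFx, hNl, hl, show (1:ℝ) - t = η ^ 2 from hηsq.symm]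
    have hNne : (N:ℝ) ≠ 0 := hNr.ne'
    field_simp
    linear_combination (Real.arccos x) * hln
  rw [key, abs_mul, abs_of_nonneg hNr.le]
  have hbd := Fx_bound hr1 hxr ht0 (le_of_le_of_eq htt₀ ht₀)
  rw [← ht₀] at hbd
  calc (N:ℝ) * |Fx x t| ≤ (N:ℝ) * ((Real.sqrt t₀)⁻¹ * (2 * t ^ 2)) :=
        mul_le_mul_of_nonneg_left hbd hNr.le
    _ = (Real.sqrt t₀)⁻¹ * (2 * (ℓ:ℝ) ^ 2) / N := by
        rw [htdef]; field_simp
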